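/- Let p_1, …, p_n, w_1, …, w_n ≥ 0 and P, W ≥ 0 be given (a Knapsack instance). Construct the BNPG game with asymmetric altruism: V = {u_1, …, u_{2n+1}}; E = {{u_i, u_{n+i}}, {u_i, u_{2n+1}} : i ∈ [n]} (a tree); a = 1; g_{u_{2n+1}}(x) = 0, g_{u_i}(x) = p_i·x and g_{u_{n+i}}(x) = P·x for all x ≥ 0 and i ∈ [n]; c_v = P for all v ∈ V. Then the following are equivalent: (1) there exists S ⊆ [n] with ∑_{i∈S} p_i ≥ P and ∑_{i∈S} w_i ≤ W; (2) there exists a set E' of directed edges, each edge (u,v) ∈ E' satisfying {u,v} ∈ E, such that ∑_{i : (u_{2n+1},u_i) ∈ E'} w_i ≤ W and the all-ones profile (every player invests) is a pure strategy Nash equilibrium of the BNPG game with asymmetric altruism (G, (V,E'), (g_v), (c_v), 1). (Here adding edge (u_{2n+1},u_i) costs w_i, and all other permitted directed edges cost 0, so condition (2) says the all-invest target profile can be made a PSNE within budget W.) -/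

import Mathlib

open Finset

/-- `Δg(t) = g(t+1) - g(t)`. -/
def dg (g : ℕ → ℝ) (t : ℕ) : ℝ := g (t + 1) - g t

/-- Number of `G`-neighbors of `v` playing 1 in the profile `x`. -/
def nv {W : Type*} [Fintype W] [DecidableEq W] (G : SimpleGraph W) [DecidableRel G.Adj]
    (x : W → Bool) (v : W) : ℕ :=
  ((G.neighborFinset v).filter (fun u => x u = true)).card

/-- Utility of player `v` in a BNPG game with altruism: input graph `G`,
altruistic (out-)neighborhoods `N`, externality functions `g`, costs `c`,
altruism parameter `a`. -/
def util {W : Type*} [Fintype W] [DecidableEq W] (G : SimpleGraph W) [DecidableRel G.Adj]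
    (N : W → Finset W) (g : W → ℕ → ℝ) (c : W → ℝ) (a : ℝ)
    (x : W → Bool) (v : W) : ℝ :=
  g v ((x v).toNat + nv G x v)
    + a * ∑ u ∈ N v, g u ((x u).toNat + nv G x u)
    - c v * (x v).toNat

/-- Pure strategy Nash equilibrium of a BNPG game with altruism. -/
def isPSNE {W : Type*} [Fintype W] [DecidableEq W] (G : SimpleGraph W) [DecidableRel G.Adj]
    (N : W → Finset W) (g : W → ℕ → ℝ) (c : W → ℝ) (a : ℝ) (x : W → Bool) : Prop :=
  ∀ v : W, ∀ b : Bool,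
    util G N g c a x v ≥ util G N g c a (Function.update x v b) v

/-- Vertex set of the Knapsack reduction: `Sum.inl (Sum.inl i)` is `u_{i+1}`,
`Sum.inl (Sum.inr i)` is `u_{n+i+1}`, and `Sum.inr ()` is `u_{2n+1}`. -/
abbrev VK (n : ℕ) := (Fin n ⊕ Fin n) ⊕ Unit

/-- Adjacency of the tree `E = {{u_i, u_{n+i}}, {u_i, u_{2n+1}} : i ∈ [n]}`. -/
def adjK {n : ℕ} : VK n → VK n → Bool
  | Sum.inl (Sum.inl i), Sum.inl (Sum.inr j) => decide (i = j)
  | Sum.inl (Sum.inr i), Sum.inl (Sum.inl j) => decide (i = j)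
  | Sum.inl (Sum.inl _), Sum.inr _ => true
  | Sum.inr _, Sum.inl (Sum.inl _) => true
  | _, _ => false

/-- The input network (a tree) of the Knapsack reduction. -/
def GK (n : ℕ) : SimpleGraph (VK n) where
  Adj a b := adjK a b = true
  symm := by
    constructor
    rintro ((i | i) | u) ((j | j) | u') h <;> simp_all [adjK]
  loopless := by
    constructor
    rintro ((i | i) | u) h <;> simp [adjK] at h

instance (n : ℕ) : DecidableRel (GK n).Adj :=
  fun a b => inferInstanceAs (Decidable (adjK a b = true))

/-- Externality functions: `g_{u_i}(x) = p_i·x`, `g_{u_{n+i}}(x) = P·x`,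
`g_{u_{2n+1}}(x) = 0`. -/
def gK {n : ℕ} (p : Fin n → ℝ) (P : ℝ) : VK n → ℕ → ℝ
  | Sum.inl (Sum.inl i) => fun t => p i * t
  | Sum.inl (Sum.inr _) => fun t => P * t
  | Sum.inr _ => fun _ => 0

/-- Marginal slope of each player's externality function. -/
def sK {n : ℕ} (p : Fin n → ℝ) (P : ℝ) : VK n → ℝ
  | Sum.inl (Sum.inl i) => p i
  | Sum.inl (Sum.inr _) => P
  | Sum.inr _ => 0

lemma gK_eq {n : ℕ} (p : Fin n → ℝ) (P : ℝ) (v : VK n) (t : ℕ) :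
    gK p P v t = sK p P v * t := by
  rcases v with ((i | i) | u) <;> simp [gK, sK]

lemma nv_true {n : ℕ} (v : VK n) :
    nv (GK n) (fun _ => true) v = (GK n).degree v := by
  unfold nv
  rw [Finset.filter_true_of_mem (fun x _ => rfl)]
  rfl

lemma nv_upd {n : ℕ} (v u : VK n) :
    nv (GK n) (Function.update (fun _ => true) v false) u
      = (((GK n).neighborFinset u).erase v).card := by
  unfold nv
  congr 1
  ext w
  by_cases h : w = v <;> simp [Function.update_apply, h]

lemma util_diff {n : ℕ} (p : Fin n → ℝ) (P : ℝ) (N : VK n → Finset (VK n))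
    (hN : ∀ v : VK n, ∀ u ∈ N v, (GK n).Adj v u) (v : VK n) :
    util (GK n) N (gK p P) (fun _ => P) 1 (fun _ => true) v
      - util (GK n) N (gK p P) (fun _ => P) 1 (Function.update (fun _ => true) v false) v
      = sK p P v + (∑ u ∈ N v, sK p P u) - P := by
  have hvv : Function.update (fun _ => true) v false v = false := by simp
  unfold util
  rw [hvv]
  simp only [Bool.toNat_true, Bool.toNat_false, nv_true, nv_upd, gK_eq, one_mul]
  have hsum : ∀ u ∈ N v,
      sK p P u * ((1 + (((GK n).neighborFinset u).erase v).card : ℕ) : ℝ)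
        = sK p P u * ((GK n).degree u : ℝ) := by
    intro u hu
    have hadj := hN v u hu
    have hne : u ≠ v := (hadj.ne).symm
    have hvmem : v ∈ (GK n).neighborFinset u := by
      rw [SimpleGraph.mem_neighborFinset]
      exact hadj.symm
    have hcard : (((GK n).neighborFinset u).erase v).card
        = (GK n).degree u - 1 := by
      rw [Finset.card_erase_of_mem hvmem]; rfl
    have hpos : 1 ≤ (GK n).degree u := Finset.card_pos.mpr ⟨v, hvmem⟩
    rw [hcard, Nat.add_sub_cancel' hpos]
  have hsum2 : ∀ u ∈ N v,
      Function.update (fun _ => true) v false u = true := by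
    intro u hu
    have hne : u ≠ v := ((hN v u hu).ne).symm
    simp [Function.update_apply, hne]
  have hvnb : (((GK n).neighborFinset v).erase v) = (GK n).neighborFinset v :=
    Finset.erase_eq_of_notMem (by simp)
  have h1 : (∑ u ∈ N v, sK p P u *
        (((Function.update (fun _ => true) v false u).toNat
          + (((GK n).neighborFinset u).erase v).card : ℕ) : ℝ))
      = ∑ u ∈ N v, sK p P u * ((GK n).degree u : ℝ) := by
    refine Finset.sum_congr rfl ?_
    intro u hu
    rw [hsum2 u hu, Bool.toNat_true]
    exact hsum u hu
  have h2 : (∑ u ∈ N v, sK p P u * ((1 + (GK n).degree u : ℕ) : ℝ))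
      = ∑ u ∈ N v, (sK p P u * ((GK n).degree u : ℝ) + sK p P u) := by
    refine Finset.sum_congr rfl ?_
    intro u hu
    push_cast
    ring
  rw [h1, h2, hvnb, Finset.sum_add_distrib]
  simp only [SimpleGraph.degree]
  push_cast
  ring

lemma psne_iff {n : ℕ} (p : Fin n → ℝ) (P : ℝ) (N : VK n → Finset (VK n))
    (hN : ∀ v : VK n, ∀ u ∈ N v, (GK n).Adj v u) :
    isPSNE (GK n) N (gK p P) (fun _ => P) 1 (fun _ => true) ↔
      ∀ v : VK n, P ≤ sK p P v + ∑ u ∈ N v, sK p P u := by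
  constructor
  · intro h v
    have hd := util_diff p P N hN v
    have := h v false
    linarith [this, hd]
  · intro h v b
    cases b
    · have hd := util_diff p P N hN v
      have := h v
      unfold GE.ge
      linarith
    · have : Function.update (fun _ => true) v true = (fun _ : VK n => true) := by
        funext u
        by_cases hu : u = v <;> simp [Function.update_apply, hu]
      rw [this]

/-- Altruistic network built from a Knapsack solution. -/
def NK {n : ℕ} (S : Finset (Fin n)) : VK n → Finset (VK n)
  | Sum.inl (Sum.inl i) => {Sum.inl (Sum.inr i)}
  | Sum.inl (Sum.inr _) => ∅
  | Sum.inr _ => S.image (fun i => Sum.inl (Sum.inl i))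

lemma inl_inl_inj {n : ℕ} : Function.Injective (fun i : Fin n => (Sum.inl (Sum.inl i) : VK n)) := by
  intro a b h
  simpa using h


/-- correctness of the Knapsack reduction for ANM with asymmetric
altruism on a tree. The Knapsack instance `(p, w, P, W)` has a solution iff there is
a directed altruistic network `N` (edges only between `G`-adjacent vertices) whose
cost — the total weight of the edges `(u_{2n+1}, u_i)` used, all other permitted
edges being free — is at most `W`, making the all-invest profile a PSNE. -/

theorem statement14 (n : ℕ) (p w : Fin n → ℝ) (P W : ℝ)
    (hp : ∀ i, 0 ≤ p i) (hw : ∀ i, 0 ≤ w i) (hP : 0 ≤ P) (hW : 0 ≤ W) :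
    (∃ S : Finset (Fin n), P ≤ ∑ i ∈ S, p i ∧ ∑ i ∈ S, w i ≤ W) ↔
    (∃ N : VK n → Finset (VK n),
      (∀ v : VK n, ∀ u ∈ N v, (GK n).Adj v u) ∧
      (∑ i ∈ Finset.univ.filter
          (fun i : Fin n => (Sum.inl (Sum.inl i) : VK n) ∈ N (Sum.inr ())), w i) ≤ W ∧
      isPSNE (GK n) N (gK p P) (fun _ => P) 1 (fun _ => true)) := by
  constructor
  · rintro ⟨S, hSP, hSW⟩
    refine ⟨NK S, ?_, ?_, ?_⟩
    · rintro ((i | i) | u) x hx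
      · simp only [NK, Finset.mem_singleton] at hx
        subst hx
        simp [GK, adjK]
      · simp [NK] at hx
      · simp only [NK, Finset.mem_image] at hx
        obtain ⟨j, _, rfl⟩ := hx
        simp [GK, adjK]
    · have hfil : Finset.univ.filter
          (fun i : Fin n => (Sum.inl (Sum.inl i) : VK n) ∈ NK S (Sum.inr ())) = S := by
        ext i
        simp [NK, inl_inl_inj.eq_iff]
      rw [hfil]
      exact hSW
    · rw [psne_iff]
      · rintro ((i | i) | u)
        · simp only [NK, sK, Finset.sum_singleton]
          linarith [hp i]
        · simp [NK, sK]
        · simp only [NK, sK]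
          rw [Finset.sum_image (fun a _ b _ h => inl_inl_inj h)]
          simp only [sK]
          linarith
      · rintro ((i | i) | u) x hx
        · simp only [NK, Finset.mem_singleton] at hx
          subst hx
          simp [GK, adjK]
        · simp [NK] at hx
        · simp only [NK, Finset.mem_image] at hx
          obtain ⟨j, _, rfl⟩ := hx
          simp [GK, adjK]
  · rintro ⟨N, hadj, hcost, hpsne⟩
    refine ⟨Finset.univ.filter (fun i : Fin n => (Sum.inl (Sum.inl i) : VK n) ∈ N (Sum.inr ())),
      ?_, hcost⟩
    have hNeq : N (Sum.inr ()) = (Finset.univ.filter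
        (fun i : Fin n => (Sum.inl (Sum.inl i) : VK n) ∈ N (Sum.inr ()))).image
        (fun i => (Sum.inl (Sum.inl i) : VK n)) := by
      ext u
      constructor
      · intro hu
        have hadju := hadj (Sum.inr ()) u hu
        rcases u with ((i | i) | u')
        · exact Finset.mem_image.mpr ⟨i, by simpa using hu, rfl⟩
        · simp [GK, adjK] at hadju
        · simp [GK, adjK] at hadju
      · intro hu
        obtain ⟨j, hj, rfl⟩ := Finset.mem_image.mp hu
        simpa using (Finset.mem_filter.mp hj).2
    have hv := (psne_iff p P N hadj).mp hpsne (Sum.inr ())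
    rw [hNeq, Finset.sum_image (fun a _ b _ h => inl_inl_inj h)] at hv
    simp only [sK, zero_add] at hv
    exact hv
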